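/- For k ≥ 2 let T_k be the k×k complex matrix with diagonal (−1, −1, …, −1, 0), with every entry on the superdiagonal equal to 1, and all other entries 0. Let v_k = (1,1,…,1)ᵗ ∈ ℂᵏ and w_k = (1,1,…,1,0)ᵗ ∈ ℂᵏ. Then T_k v_k = 0, (T_k + I_k)ᵏ w_k = 0, and ⟨v_k, w_k⟩/(‖v_k‖‖w_k‖) = √(1 − 1/k), which tends to 1 as k → ∞ (so the angle between v_k and w_k tends to 0). -/

import Mathlib

lemma rowSum {k : ℕ} (i : Fin k) (a c : ℂ) (u : Fin k → ℂ) :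
    (∑ j : Fin k, (if i = j then a else if (j:ℕ) = (i:ℕ)+1 then c else 0) * u j)
    = a * u i + (if h : (i:ℕ)+1 < k then c * u ⟨(i:ℕ)+1, h⟩ else 0) := by
  by_cases h : (i:ℕ)+1 < k
  · rw [dif_pos h]
    set i' : Fin k := ⟨(i:ℕ)+1, h⟩ with hi'
    have hii' : i ≠ i' := by
      intro e
      have := congrArg Fin.val e
      simp [hi'] at this
    have key : ∀ j : Fin k, (if i = j then a else if (j:ℕ) = (i:ℕ)+1 then c else 0) * u j
        = (if j = i then a * u j else 0) + (if j = i' then c * u j else 0) := by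
      intro j
      by_cases hji : j = i
      · have h2 : ¬ ((j:ℕ) = (i:ℕ)+1) := by simp [hji]
        simp only [hji, if_pos rfl, h2, if_false, if_neg hii', if_neg (Ne.symm hii'), ite_false, add_zero]
        simp
      · have hij : ¬ (i = j) := fun e => hji e.symm
        by_cases hj2 : j = i'
        · have : (j:ℕ) = (i:ℕ)+1 := by simp [hj2, hi']
          simp only [hj2, if_neg hij, this, if_pos rfl, if_pos, if_neg hii', if_neg (Ne.symm hii'), zero_add]
          simp [hi']
        · have h3 : ¬ ((j:ℕ) = (i:ℕ)+1) := fun e => hj2 (Fin.ext e)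
          simp [hij, hji, hj2, h3]
    rw [Finset.sum_congr rfl (fun j _ => key j), Finset.sum_add_distrib,
      Finset.sum_ite_eq' Finset.univ i, Finset.sum_ite_eq' Finset.univ i']
    simp
  · rw [dif_neg h]
    have key : ∀ j : Fin k, (if i = j then a else if (j:ℕ) = (i:ℕ)+1 then c else 0) * u j
        = (if j = i then a * u j else 0) := by
      intro j
      have h3 : ¬ ((j:ℕ) = (i:ℕ)+1) := by have := j.isLt; omega
      by_cases hji : j = i
      · simp [hji]
      · have hij : ¬ (i = j) := fun e => hji e.symm
        simp [hij, hji, h3]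
    rw [Finset.sum_congr rfl (fun j _ => key j), Finset.sum_ite_eq' Finset.univ i]
    simp

/-- Eigenvector and angle computations from Example 4.3: for the `k×k` matrix `T_k` with
diagonal `(−1,…,−1,0)`, superdiagonal entries `1` and all other entries `0`, the vector
`v_k = (1,…,1)ᵗ` is in `ker T_k`, the vector `w_k = (1,…,1,0)ᵗ` is in `ker (T_k + I)ᵏ`,
and the normalized inner product of `v_k` and `w_k` equals `√(1 − 1/k)`, which tends to
`1` as `k → ∞`. -/
theorem example_angles_tend_to_zero
    (k : ℕ) (hk : 2 ≤ k)
    (T : Matrix (Fin k) (Fin k) ℂ)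
    (hT : ∀ i j : Fin k, T i j =
      if i = j then (if (i : ℕ) = k - 1 then 0 else -1)
      else if (j : ℕ) = (i : ℕ) + 1 then 1 else 0)
    (v w : Fin k → ℂ)
    (hv : ∀ i, v i = 1)
    (hw : ∀ i, w i = if (i : ℕ) = k - 1 then 0 else 1) :
    T.mulVec v = 0 ∧
    ((T + 1) ^ k).mulVec w = 0 ∧
    ‖∑ i, (starRingEnd ℂ) (v i) * w i‖ /
        (Real.sqrt (∑ i, ‖v i‖ ^ 2) * Real.sqrt (∑ i, ‖w i‖ ^ 2)) =
      Real.sqrt (1 - 1 / (k : ℝ)) ∧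
    Filter.Tendsto (fun m : ℕ => Real.sqrt (1 - 1 / (m : ℝ))) Filter.atTop (nhds 1) := by
  refine ⟨?_, ?_, ?_, ?_⟩
  · -- T v = 0
    funext i
    have : T.mulVec v i = ∑ j, (if i = j then (if (i:ℕ) = k-1 then (0:ℂ) else -1)
        else if (j:ℕ) = (i:ℕ)+1 then 1 else 0) * v j := by
      simp [Matrix.mulVec, dotProduct, hT]
    rw [this, rowSum]
    have hlt := i.isLt
    by_cases hi : (i:ℕ) = k - 1
    · have h2 : ¬ ((i:ℕ)+1 < k) := by omega
      rw [dif_neg h2]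
      simp [hi, hv]
    · have h2 : (i:ℕ)+1 < k := by omega
      rw [dif_pos h2]
      simp [hi, hv]
  · -- (T+1)^k w = 0
    have hN : ∀ i j : Fin k, (T + 1) i j =
        if i = j then (if (i:ℕ) = k-1 then (1:ℂ) else 0)
        else if (j:ℕ) = (i:ℕ)+1 then 1 else 0 := by
      intro i j
      rw [Matrix.add_apply, hT, Matrix.one_apply]
      split_ifs <;> ring
    have key : ∀ m : ℕ, ((T + 1) ^ m).mulVec w =
        fun i : Fin k => if (i:ℕ) + m < k - 1 then (1:ℂ) else 0 := by
      intro m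
      induction m with
      | zero =>
        funext i
        have hlt := i.isLt
        simp only [pow_zero, Matrix.one_mulVec, hw]
        by_cases hi : (i:ℕ) = k - 1
        · have h3 : ¬ ((i:ℕ) < k - 1) := by omega
          simp [hi, h3]
        · have h3 : (i:ℕ) < k - 1 := by omega
          simp [hi, h3]
      | succ m ih =>
        funext i
        rw [pow_succ', ← Matrix.mulVec_mulVec, ih]
        have : (T + 1).mulVec (fun i => if (i:ℕ) + m < k - 1 then (1:ℂ) else 0) i
            = ∑ j, (if i = j then (if (i:ℕ) = k-1 then (1:ℂ) else 0)
              else if (j:ℕ) = (i:ℕ)+1 then 1 else 0) *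
                (if (j:ℕ) + m < k - 1 then (1:ℂ) else 0) := by
          simp [Matrix.mulVec, dotProduct, hN]
        rw [this, rowSum]
        have hlt := i.isLt
        by_cases hi : (i:ℕ) = k - 1
        · have h2 : ¬ ((i:ℕ)+1 < k) := by omega
          have h3 : ¬ ((i:ℕ) + m < k - 1) := by omega
          have h4 : ¬ ((i:ℕ) + (m+1) < k - 1) := by omega
          simp [hi, h2, h3, h4]
          omega
        · have h2 : (i:ℕ)+1 < k := by omega
          have h3 : ((i:ℕ)+1 + m < k - 1) ↔ ((i:ℕ) + (m+1) < k - 1) := by omega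
          simp only [hi, if_false, zero_mul, zero_add, dif_pos h2, one_mul]
          by_cases h4 : (i:ℕ) + (m+1) < k - 1
          · simp [h4, h3.mpr h4]
          · simp [h4, fun h => h4 (h3.mp h)]
            omega
    funext i
    rw [key k]
    have hlt := i.isLt
    have : ¬ ((i:ℕ) + k < k - 1) := by omega
    simp [this]
  · -- inner product formula
    have hk0 : k - 1 < k := by omega
    set i0 : Fin k := ⟨k-1, hk0⟩ with hi0
    have hcond : ∀ i : Fin k, ((i:ℕ) = k-1) ↔ i = i0 := by
      intro i
      constructor
      · intro h; exact Fin.ext h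
      · intro h; simp [h, hi0]
    have hsum1 : (∑ i, (starRingEnd ℂ) (v i) * w i) = (k:ℂ) - 1 := by
      have : ∀ i : Fin k, (starRingEnd ℂ) (v i) * w i
          = 1 - (if i = i0 then 1 else 0) := by
        intro i
        rw [hv, hw]
        by_cases h : (i:ℕ) = k - 1
        · simp [h, (hcond i).mp h, hi0]
        · have hne : i ≠ i0 := fun e => h ((hcond i).mpr e)
          simp [h, hne]
      rw [Finset.sum_congr rfl (fun i _ => this i), Finset.sum_sub_distrib,
        Finset.sum_const, Finset.sum_ite_eq' Finset.univ i0]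
      simp
    have hsum2 : (∑ i : Fin k, ‖v i‖ ^ 2) = (k:ℝ) := by
      simp [hv]
    have hsum3 : (∑ i : Fin k, ‖w i‖ ^ 2) = (k:ℝ) - 1 := by
      have : ∀ i : Fin k, ‖w i‖ ^ 2 = 1 - (if i = i0 then 1 else 0) := by
        intro i
        rw [hw]
        by_cases h : (i:ℕ) = k - 1
        · simp [h, (hcond i).mp h, hi0]
        · have hne : i ≠ i0 := fun e => h ((hcond i).mpr e)
          simp [h, hne]
      rw [Finset.sum_congr rfl (fun i _ => this i), Finset.sum_sub_distrib,
        Finset.sum_const, Finset.sum_ite_eq' Finset.univ i0]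
      simp
    rw [hsum1, hsum2, hsum3]
    have hkR : (2:ℝ) ≤ (k:ℝ) := by exact_mod_cast hk
    have h1 : (0:ℝ) < (k:ℝ) := by linarith
    have h2 : (0:ℝ) < (k:ℝ) - 1 := by linarith
    have habs : ‖(k:ℂ) - 1‖ = (k:ℝ) - 1 := by
      rw [show ((k:ℂ) - 1) = (((k:ℝ) - 1 : ℝ) : ℂ) by push_cast; ring]
      rw [Complex.norm_real, Real.norm_eq_abs, abs_of_pos h2]
    rw [habs]
    have heq : 1 - 1 / (k:ℝ) = ((k:ℝ) - 1) / (k:ℝ) := by field_simp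
    rw [heq, Real.sqrt_div h2.le,
      div_eq_div_iff (by positivity : Real.sqrt (k:ℝ) * Real.sqrt ((k:ℝ)-1) ≠ 0)
        (by positivity : Real.sqrt (k:ℝ) ≠ 0)]
    ring_nf
    rw [Real.sq_sqrt (by linarith : (0:ℝ) ≤ -1 + (k:ℝ))]
    ring
  · -- limit
    have h1 : Filter.Tendsto (fun m : ℕ => 1 - 1/(m:ℝ)) Filter.atTop (nhds 1) := by
      have := tendsto_one_div_atTop_nhds_zero_nat (𝕜 := ℝ)
      have := Filter.Tendsto.const_sub (1:ℝ) this
      simpa using this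
    have h2 := (Real.continuous_sqrt.tendsto 1).comp h1
    simpa [Function.comp_def, Real.sqrt_one] using h2
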